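/- Let m be an odd positive integer and let r be an integer coprime to m, and let μ_r denote the permutation of ℤ/mℤ given by multiplication by r. Then the sign of μ_r equals (-1)^T, where T = ∑_{d ∣ m, d > 1} φ(d)/ord_d(r), the sum being over the divisors d of m with d > 1, φ being Euler's totient function and ord_d(r) the multiplicative order of r modulo d. -/

import Mathlib

open Equiv Equiv.Perm Finset Subgroup

def fiberEquiv {ι : Type*} {f : ι → Type*} (i : ι) : f i ≃ {x : Σ j, f j // x.1 = i} where
  toFun a := ⟨⟨i, a⟩, rfl⟩
  invFun x := cast (congrArg f x.2) x.1.2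
  left_inv a := rfl
  right_inv := by rintro ⟨⟨j, a⟩, rfl⟩; rfl

theorem sigmaCongrRight_mulSingle {ι : Type*} [DecidableEq ι] {f : ι → Type*}
    [∀ i, DecidableEq (f i)] (i : ι) (τ : Perm (f i)) :
    Equiv.sigmaCongrRight (Pi.mulSingle i τ) =
      τ.extendDomain (fiberEquiv i) := by
  apply Equiv.ext
  rintro ⟨j, a⟩
  rcases eq_or_ne j i with rfl | h
  · rw [τ.extendDomain_apply_subtype (fiberEquiv j) (b := ⟨j, a⟩) rfl]
    simp [fiberEquiv, Equiv.sigmaCongrRight]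
  · rw [Perm.extendDomain_apply_not_subtype _ _ (by exact h)]
    simp [Equiv.sigmaCongrRight, Pi.mulSingle_eq_of_ne h]

theorem sign_sigmaCongrRight' {ι : Type*} [Fintype ι] [DecidableEq ι] {f : ι → Type*}
    [∀ i, Fintype (f i)] [∀ i, DecidableEq (f i)] (F : ∀ i, Perm (f i)) :
    Perm.sign (Equiv.sigmaCongrRight F) = ∏ i, Perm.sign (F i) := by
  have h1 : Equiv.sigmaCongrRight F =
      (Equiv.Perm.sigmaCongrRightHom f)
        (univ.noncommProd (fun i => Pi.mulSingle i (F i))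
          (show ((univ : Finset ι) : Set ι).Pairwise (Function.onFun Commute fun i => Pi.mulSingle i (F i)) from fun i _ j _ _ => Pi.mulSingle_apply_commute F i j)) := by
    rw [Finset.noncommProd_mulSingle]
    rfl
  rw [h1, ← MonoidHom.comp_apply, Finset.map_noncommProd, Finset.noncommProd_eq_prod]
  refine Finset.prod_congr rfl fun i _ => ?_
  show Perm.sign (Equiv.sigmaCongrRight (Pi.mulSingle i (F i))) = _
  rw [sigmaCongrRight_mulSingle, Perm.sign_extendDomain]

theorem sign_mulRight_zpowers {G : Type*} [Group G] (g : G) (hfin : IsOfFinOrder g)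
    [Fintype (zpowers g)] [DecidableEq (zpowers g)] :
    Perm.sign (Equiv.mulRight (⟨g, mem_zpowers g⟩ : zpowers g) :
        Perm (zpowers g)) = (-1) ^ (orderOf g - 1) := by
  obtain ⟨n, hn⟩ : ∃ n, orderOf g = n + 1 :=
    ⟨orderOf g - 1, (Nat.succ_pred_eq_of_pos hfin.orderOf_pos).symm⟩
  set e : Fin (orderOf g) ≃ (zpowers g : Set G) := finEquivZPowers hfin with he
  set e' : Fin (n + 1) ≃ (zpowers g : Set G) := (finCongr hn.symm).trans e with he'
  have key : ∀ x : Fin (n + 1), e' (finRotate (n + 1) x) =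
      Equiv.mulRight (⟨g, mem_zpowers g⟩ : zpowers g) (e' x) := by
    intro x
    apply Subtype.ext
    simp only [he', he, Equiv.trans_apply, finEquivZPowers_apply]
    show g ^ (((finCongr hn.symm) (finRotate (n+1) x) : Fin (orderOf g)) : ℕ)
        = (((⟨g ^ (((finCongr hn.symm) x : Fin (orderOf g)) : ℕ), _⟩ : zpowers g) *
            ⟨g, mem_zpowers g⟩ : zpowers g) : G)
    rw [Subgroup.coe_mul]
    have h1 : (((finCongr hn.symm) (finRotate (n+1) x) : Fin (orderOf g)) : ℕ)
        = ((x : ℕ) + 1) % orderOf g := by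
      simp [finRotate_succ_apply, Fin.add_def, hn]
    have h2 : (((finCongr hn.symm) x : Fin (orderOf g)) : ℕ) = (x : ℕ) := by simp
    rw [h1]
    simp only [h2]
    rw [pow_mod_orderOf, pow_succ]
  have hs := Perm.sign_eq_sign_of_equiv (finRotate (n + 1))
    (Equiv.mulRight (⟨g, mem_zpowers g⟩ : zpowers g)) e' key
  rw [← hs, sign_finRotate, hn]

theorem sign_mulRight_comm {G : Type*} [CommGroup G] [Fintype G] [DecidableEq G] (g : G) :
    Perm.sign (Equiv.mulRight g) =
      (-1) ^ (Fintype.card G - Fintype.card G / orderOf g) := by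
  classical
  set H : Subgroup G := zpowers g with hH
  letI : Fintype H := Fintype.ofFinite H
  letI : Fintype (G ⧸ H) := Fintype.ofFinite _
  set g₀ : H := ⟨g, mem_zpowers g⟩ with hg₀
  set E : (G ⧸ H) × H → G := fun p => (Quotient.out p.1) * (p.2 : G) with hE
  have hinj : Function.Injective E := by
    rintro ⟨q1, h1⟩ ⟨q2, h2⟩ h
    have hq : q1 = q2 := by
      have e1 : (QuotientGroup.mk (Quotient.out q1 * (h1 : G)) : G ⧸ H) = q1 := by
        rw [QuotientGroup.mk_mul_of_mem _ h1.2]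
        exact QuotientGroup.out_eq' q1
      have e2 : (QuotientGroup.mk (Quotient.out q2 * (h2 : G)) : G ⧸ H) = q2 := by
        rw [QuotientGroup.mk_mul_of_mem _ h2.2]
        exact QuotientGroup.out_eq' q2
      rw [← e1, ← e2]
      exact congrArg _ h
    subst hq
    have : (h1 : G) = h2 := mul_left_cancel h
    simp [Subtype.ext this]
  have hcardH : Nat.card H = orderOf g := Nat.card_zpowers g
  have hcard : Fintype.card ((G ⧸ H) × H) = Fintype.card G := by
    rw [Fintype.card_prod]
    have := Subgroup.card_eq_card_quotient_mul_card_subgroup H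
    simpa [Nat.card_eq_fintype_card] using this.symm
  have hbij : Function.Bijective E :=
    (Fintype.bijective_iff_injective_and_card E).mpr ⟨hinj, hcard⟩
  set eE : ((G ⧸ H) × H) ≃ G := Equiv.ofBijective E hbij with heE
  have key : ∀ x : (G ⧸ H) × H,
      eE ((Equiv.prodCongrRight (fun _ => Equiv.mulRight g₀)) x) = Equiv.mulRight g (eE x) := by
    rintro ⟨q, h⟩
    show (Quotient.out q) * ((h * g₀ : H) : G) = ((Quotient.out q) * (h : G)) * g
    rw [Subgroup.coe_mul, hg₀, mul_assoc]
  have hs := Perm.sign_eq_sign_of_equiv (Equiv.prodCongrRight (fun _ => Equiv.mulRight g₀))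
    (Equiv.mulRight g) eE key
  rw [← hs, Perm.sign_prodCongrRight]
  have hfin : IsOfFinOrder g := isOfFinOrder_of_finite g
  rw [Finset.prod_const, sign_mulRight_zpowers g hfin, ← pow_mul]
  congr 1
  have hq : Fintype.card (G ⧸ H) = Fintype.card G / orderOf g := by
    have := Subgroup.card_eq_card_quotient_mul_card_subgroup H
    rw [hcardH, Nat.card_eq_fintype_card, Nat.card_eq_fintype_card] at this
    exact (Nat.div_eq_of_eq_mul_left hfin.orderOf_pos this).symm
  rw [Finset.card_univ, hq, Nat.sub_mul, one_mul,
    Nat.mul_div_cancel' orderOf_dvd_card]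

theorem neg_one_pow_eq_of_mod_two {A B : ℕ} (h : A % 2 = B % 2) :
    ((-1 : ℤˣ)) ^ A = (-1) ^ B := by
  rw [← Nat.div_add_mod A 2, ← Nat.div_add_mod B 2, h, pow_add, pow_add, pow_mul, pow_mul]
  norm_num

theorem sign_mul_perm_zmod (m : ℕ) [NeZero m] (hm : Odd m) (r : ℤ)
    (hr : IsCoprime r (m : ℤ)) (σ : Equiv.Perm (ZMod m))
    (hσ : ∀ z : ZMod m, σ z = (r : ZMod m) * z) :
    Equiv.Perm.sign σ =
      (-1) ^ (∑ d ∈ m.divisors.filter (fun d => 1 < d),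
        d.totient / orderOf ((r : ZMod d))) := by
  classical
  haveI hNZ : ∀ d : {d : ℕ // d ∈ m.divisors}, NeZero (d : ℕ) :=
    fun d => ⟨(Nat.pos_of_mem_divisors d.2).ne'⟩
  -- units
  have hUnit : ∀ d : {d : ℕ // d ∈ m.divisors}, IsUnit ((r : ZMod (d : ℕ))) := by
    intro d
    have hdvd : ((d : ℕ) : ℤ) ∣ (m : ℤ) :=
      Int.natCast_dvd_natCast.mpr (Nat.dvd_of_mem_divisors d.2)
    have hc : IsCoprime r (((d : ℕ) : ℤ)) := hr.of_isCoprime_of_dvd_right hdvd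
    obtain ⟨a, b, hab⟩ := hc
    have h1 : (a : ZMod (d : ℕ)) * (r : ZMod (d : ℕ)) = 1 := by
      have h2 := congrArg (fun z : ℤ => ((z : ℤ) : ZMod (d : ℕ))) hab
      push_cast at h2
      simpa [ZMod.natCast_self] using h2
    exact IsUnit.of_mul_eq_one _ (by rw [mul_comm]; exact h1)
  set U : ∀ d : {d : ℕ // d ∈ m.divisors}, (ZMod (d : ℕ))ˣ := fun d => (hUnit d).unit with hU
  set F : ∀ d : {d : ℕ // d ∈ m.divisors}, Perm ((ZMod (d : ℕ))ˣ) :=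
    fun d => Equiv.mulRight (U d) with hF
  set E : (Σ d : {d : ℕ // d ∈ m.divisors}, (ZMod (d : ℕ))ˣ) → ZMod m :=
    fun x => (((m / (x.1 : ℕ)) * ((x.2 : ZMod (x.1 : ℕ)).val) : ℕ) : ZMod m) with hE
  -- surjectivity
  have hsurj : Function.Surjective E := by
    intro z
    have hk : z.val < m := ZMod.val_lt z
    set k := z.val with hkdef
    set g := Nat.gcd k m with hgdef
    have hg : 0 < g := Nat.gcd_pos_of_pos_right _ (Nat.pos_of_ne_zero (NeZero.ne m))
    have hgm : g ∣ m := Nat.gcd_dvd_right k m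
    have hgk : g ∣ k := Nat.gcd_dvd_left k m
    have hdm : m / g ∣ m := Nat.div_dvd_of_dvd hgm
    have hmem : m / g ∈ m.divisors := Nat.mem_divisors.mpr ⟨hdm, NeZero.ne m⟩
    have hco : Nat.Coprime (k / g) (m / g) := Nat.coprime_div_gcd_div_gcd hg
    refine ⟨⟨⟨m / g, hmem⟩, ZMod.unitOfCoprime (k / g) hco⟩, ?_⟩
    haveI : NeZero (m / g) := hNZ ⟨m / g, hmem⟩
    have hval : (((k / g : ℕ) : ZMod (m / g))).val = k / g :=
      ZMod.val_cast_of_lt (Nat.div_lt_div_of_lt_of_dvd hgm hk)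
    have harg : m / (m / g) * ((ZMod.unitOfCoprime (k / g) hco : ZMod (m / g)).val) = k := by
      rw [ZMod.coe_unitOfCoprime, hval, Nat.div_div_self hgm (NeZero.ne m),
        Nat.mul_div_cancel' hgk]
    show (((m / (m / g)) * ((ZMod.unitOfCoprime (k / g) hco : ZMod (m / g)).val) : ℕ) : ZMod m) = z
    rw [harg]
    exact ZMod.natCast_rightInverse z
  -- cardinality
  have hcards : Fintype.card (Σ d : {d : ℕ // d ∈ m.divisors}, (ZMod (d : ℕ))ˣ)
      = Fintype.card (ZMod m) := by
    rw [Fintype.card_sigma, ZMod.card m]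
    have h1 : ∀ d : {d : ℕ // d ∈ m.divisors},
        Fintype.card ((ZMod (d : ℕ))ˣ) = Nat.totient (d : ℕ) :=
      fun d => ZMod.card_units_eq_totient _
    rw [Finset.sum_congr rfl (fun d _ => h1 d), Finset.sum_coe_sort m.divisors Nat.totient,
      Nat.sum_totient]
  have hbij : Function.Bijective E :=
    (Fintype.bijective_iff_surjective_and_card E).mpr ⟨hsurj, hcards⟩
  -- equivariance
  have key : ∀ x, (Equiv.ofBijective E hbij) ((Equiv.sigmaCongrRight F) x)
      = σ ((Equiv.ofBijective E hbij) x) := by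
    rintro ⟨d, u⟩
    rw [hσ]
    show (((m / (d : ℕ)) * ((↑(u * U d) : ZMod (d : ℕ)).val) : ℕ) : ZMod m)
      = (r : ZMod m) * (((m / (d : ℕ)) * ((↑u : ZMod (d : ℕ)).val) : ℕ) : ZMod m)
    obtain ⟨c, hc⟩ : ∃ c : ℕ, c = m / (d : ℕ) := ⟨_, rfl⟩
    rw [← hc]
    set A := (↑(u * U d) : ZMod (d : ℕ)).val with hA
    set B := (↑u : ZMod (d : ℕ)).val with hB
    have h2 : ((d : ℕ) : ℤ) ∣ ((A : ℤ) - r * (B : ℤ)) := by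
      rw [← ZMod.intCast_zmod_eq_zero_iff_dvd]
      push_cast
      rw [hA, hB]
      simp only [ZMod.natCast_val, ZMod.cast_id, Units.val_mul, hU]
      rw [IsUnit.unit_spec (hUnit d)]
      ring
    have h3 : (m : ℤ) ∣ (c : ℤ) * ((A : ℤ) - r * (B : ℤ)) := by
      have hmd : (c : ℤ) * ((d : ℕ) : ℤ) = (m : ℤ) := by
        rw [hc]
        exact_mod_cast congrArg (Nat.cast : ℕ → ℤ)
          (Nat.div_mul_cancel (Nat.dvd_of_mem_divisors d.2))
      rw [← hmd]
      exact mul_dvd_mul_left _ h2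
    have h4 := (ZMod.intCast_zmod_eq_zero_iff_dvd _ m).mpr h3
    push_cast at h4 ⊢
    linear_combination h4
  have hsign : Perm.sign (Equiv.sigmaCongrRight F) = Perm.sign σ :=
    Perm.sign_eq_sign_of_equiv _ _ (Equiv.ofBijective E hbij) key
  rw [← hsign, sign_sigmaCongrRight']
  -- compute each factor
  have horder : ∀ d : {d : ℕ // d ∈ m.divisors},
      orderOf (U d) = orderOf ((r : ZMod (d : ℕ))) := by
    intro d
    rw [← (hUnit d).unit_spec, orderOf_units]
  have hfac : ∀ d : {d : ℕ // d ∈ m.divisors}, Perm.sign (F d)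
      = (-1 : ℤˣ) ^ (Nat.totient (d : ℕ)
          - Nat.totient (d : ℕ) / orderOf ((r : ZMod (d : ℕ)))) := by
    intro d
    rw [hF]
    rw [sign_mulRight_comm (U d), ZMod.card_units_eq_totient, horder d]
  rw [Finset.prod_congr rfl (fun d _ => hfac d), Finset.prod_pow_eq_pow_sum,
    Finset.sum_coe_sort m.divisors
      (fun d => Nat.totient d - Nat.totient d / orderOf ((r : ZMod d)))]
  -- parity bookkeeping
  apply neg_one_pow_eq_of_mod_two
  rw [← Finset.sum_filter_add_sum_filter_not m.divisors (fun d => 1 < d)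
    (fun d => Nat.totient d - Nat.totient d / orderOf ((r : ZMod d)))]
  have hzero : ∑ d ∈ m.divisors.filter (fun d => ¬ 1 < d),
      (Nat.totient d - Nat.totient d / orderOf ((r : ZMod d))) = 0 := by
    apply Finset.sum_eq_zero
    intro d hd
    rw [Finset.mem_filter] at hd
    have hd1 : d = 1 := by
      have := Nat.pos_of_mem_divisors hd.1
      omega
    subst hd1
    have h1 : ((r : ZMod 1)) = 1 := Subsingleton.elim _ _
    rw [Nat.totient_one, h1, orderOf_one]
    norm_num
  have hterm : ∀ d ∈ m.divisors.filter (fun d => 1 < d),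
      (Nat.totient d - Nat.totient d / orderOf ((r : ZMod d))) % 2
        = (Nat.totient d / orderOf ((r : ZMod d))) % 2 := by
    intro d hd
    rw [Finset.mem_filter] at hd
    have hd2 : 2 < d := by
      by_contra hcon
      push_neg at hcon
      have hd2' : d = 2 := by omega
      subst hd2'
      obtain ⟨c, hc⟩ : (2 : ℕ) ∣ m := Nat.dvd_of_mem_divisors hd.1
      rw [Nat.odd_iff] at hm
      omega
    have heven : Even (Nat.totient d) := Nat.totient_even hd2
    haveI : NeZero d := ⟨by omega⟩
    have hord : orderOf ((r : ZMod d)) = orderOf ((hUnit ⟨d, hd.1⟩).unit) := by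
      conv_lhs => rw [← (hUnit ⟨d, hd.1⟩).unit_spec]
      rw [orderOf_units]
    have hdvd : orderOf ((r : ZMod d)) ∣ Nat.totient d := by
      rw [hord, ← ZMod.card_units_eq_totient d]
      exact orderOf_dvd_card
    have hle : Nat.totient d / orderOf ((r : ZMod d)) ≤ Nat.totient d := Nat.div_le_self _ _
    obtain ⟨x, hx⟩ := heven
    omega
  rw [hzero, Nat.add_zero, Finset.sum_nat_mod, Finset.sum_congr rfl hterm, ← Finset.sum_nat_mod]
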